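/- Consider the finite abstraction product game with finite nonempty sets X̂, Q, Û, Ŵ, accepting set F ⊆ Q, δ ∈ [0,1], row-stochastic transition function T̂, and nonempty set-valued map S as in the context, and fix a Markov policy ρ = (ρ_0,…,ρ_{H−1}) for Player I over horizon H. Construct a Markov policy λ^* for Player II backwards: for n = 0,…,H−1 and each (x̂,q) with q ∉ F, letting û = ρ_{H−n−1}(x̂,q), choose λ^*_{H−n−1}(x̂,q,û) to be a maximizer over ŵ ∈ Ŵ of (1−δ)·Σ_{x̂'∈X̂} (max_{q'∈S(q,x̂')} V̲^{ρ,λ^*}_n(x̂',q'))·T̂(x̂,û,ŵ)(x̂') + δ (this is well-defined since V̲^{ρ,λ^*}_n depends only on the already-constructed stages λ^*_{H−n},…,λ^*_{H−1}). Then for every Markov policy λ for Player II over horizon H and every (x̂,q) ∈ X̂ × Q, V̲^{ρ,λ^*}_H(x̂,q) ≥ V̲^{ρ,λ}_H(x̂,q). -/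

import Mathlib

/-- Worst-case-violation cost-to-go `V̲^{ρ,λ}_n` of the finite abstraction product game under
Markov policies `ρ` (Player I) and `λ` (Player II) over horizon `H`:
`V̲^{ρ,λ}_0(x̂,q) = 1_F(q)`; `V̲^{ρ,λ}_{n+1}(x̂,q) = 1` if `q ∈ F`, otherwise
`V̲^{ρ,λ}_{n+1}(x̂,q) = (1−δ) Σ_{x̂'} (max_{q' ∈ S(q,x̂')} V̲^{ρ,λ}_n(x̂',q')) T̂(x̂,û,ŵ)(x̂') + δ`
with `û = ρ_{H−n−1}(x̂,q)` and `ŵ = λ_{H−n−1}(x̂,q,û)`. -/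
noncomputable def VlowPol {X Q U W : Type*} [Fintype X] [DecidableEq Q]
    (F : Finset Q) (δ : ℝ) (T : X → U → W → X → ℝ) (S : Q → X → Finset Q)
    (hS : ∀ (q : Q) (x' : X), (S q x').Nonempty)
    (ρ : ℕ → X → Q → U) (lam : ℕ → X → Q → U → W) (H : ℕ) : ℕ → X → Q → ℝ
  | 0 => fun _ q => if q ∈ F then 1 else 0
  | n + 1 => fun x q =>
      if q ∈ F then 1
      else (1 - δ) * (∑ x' : X,
        ((S q x').sup' (hS q x') fun q' => VlowPol F δ T S hS ρ lam H n x' q') *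
          T x (ρ (H - n - 1) x q) (lam (H - n - 1) x q (ρ (H - n - 1) x q)) x') + δ

/-- Fix a Markov policy `ρ` for Player I over horizon `H` and a policy `λ*`
for Player II constructed backwards so that at each backward step `n < H` and each `(x̂,q)`
with `q ∉ F` (with `û = ρ_{H−n−1}(x̂,q)`), the value
`(1−δ) Σ_{x̂'} (max_{q'∈S(q,x̂')} V̲^{ρ,λ*}_n(x̂',q')) T̂(x̂,û,λ*_{H−n−1}(x̂,q,û))(x̂') + δ`
maximizes over `ŵ ∈ Ŵ` the corresponding expression. Then for every Markov policy `λ` of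
Player II and every `(x̂,q)`, `V̲^{ρ,λ*}_H(x̂,q) ≥ V̲^{ρ,λ}_H(x̂,q)`. -/
theorem worst_case_adversary_maximizes
    {X Q U W : Type*} [Fintype X] [Fintype Q] [Fintype U] [Fintype W]
    [Nonempty X] [Nonempty Q] [Nonempty U] [Nonempty W] [DecidableEq Q]
    (F : Finset Q) (δ : ℝ) (hδ0 : 0 ≤ δ) (hδ1 : δ ≤ 1)
    (T : X → U → W → X → ℝ) (S : Q → X → Finset Q)
    (hS : ∀ (q : Q) (x' : X), (S q x').Nonempty)
    (hT0 : ∀ (x : X) (u : U) (w : W) (x' : X), 0 ≤ T x u w x')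
    (hT1 : ∀ (x : X) (u : U) (w : W), ∑ x' : X, T x u w x' = 1)
    (H : ℕ) (ρ : ℕ → X → Q → U) (lamStar : ℕ → X → Q → U → W)
    (hmax : ∀ n < H, ∀ (x : X) (q : Q), q ∉ F → ∀ w : W,
      (1 - δ) * (∑ x' : X,
          ((S q x').sup' (hS q x') fun q' => VlowPol F δ T S hS ρ lamStar H n x' q') *
            T x (ρ (H - n - 1) x q) w x') + δ ≤
        (1 - δ) * (∑ x' : X,
          ((S q x').sup' (hS q x') fun q' => VlowPol F δ T S hS ρ lamStar H n x' q') *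
            T x (ρ (H - n - 1) x q) (lamStar (H - n - 1) x q (ρ (H - n - 1) x q)) x') + δ) :
    ∀ (lam : ℕ → X → Q → U → W) (x : X) (q : Q),
      VlowPol F δ T S hS ρ lam H H x q ≤ VlowPol F δ T S hS ρ lamStar H H x q := by
  intro lam
  suffices h : ∀ n ≤ H, ∀ (x : X) (q : Q),
      VlowPol F δ T S hS ρ lam H n x q ≤ VlowPol F δ T S hS ρ lamStar H n x q by
    exact h H le_rfl
  intro n
  induction n with
  | zero => intro _ x q; simp [VlowPol]
  | succ n ih =>
    intro hn x q
    have hn' : n < H := hn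
    have ihn := ih (Nat.le_of_lt hn')
    by_cases hq : q ∈ F
    · simp [VlowPol, hq]
    · simp only [VlowPol, hq, if_false]
      refine le_trans ?_ (hmax n hn' x q hq (lam (H - n - 1) x q (ρ (H - n - 1) x q)))
      have hsup : ∀ x' : X,
          ((S q x').sup' (hS q x') fun q' => VlowPol F δ T S hS ρ lam H n x' q') ≤
          ((S q x').sup' (hS q x') fun q' => VlowPol F δ T S hS ρ lamStar H n x' q') := by
        intro x'
        refine Finset.sup'_le _ _ fun q' hq' => le_trans (ihn x' q') (Finset.le_sup' _ hq')
      have h1δ : (0:ℝ) ≤ 1 - δ := by linarith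
      exact add_le_add_left (mul_le_mul_of_nonneg_left
        (Finset.sum_le_sum fun x' _ =>
          mul_le_mul_of_nonneg_right (hsup x') (hT0 _ _ _ _)) h1δ) δ
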